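/- Let (E_n)_{n∈ℕ} be a strictly increasing sequence of negative real numbers with lim_{n→∞} E_n = 0, and let (M_n)_{n∈ℕ} be positive integers. Let I = {(n,i) : n ∈ ℕ, 1 ≤ i ≤ M_n}. Then there exists an at most countable partition (I_k)_k of I such that for every k: (a) I_k is infinite; (b) the first-coordinate map (n,i) ↦ n is injective on I_k; and (c) ∑_{(n,i) ∈ I_k} E_n² < ∞. -/
import Mathlib

open Set Filter

/-- Auxiliary lemma: given an injective `φ` along which `E ^ 2` is summable, we can build
the desired partition. -/
theorem aux_partition_index_set
    (E : ℕ → ℝ) (M : ℕ → ℕ) (hM : ∀ n, 1 ≤ M n)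
    (φ : ℕ → ℕ) (hφ : Function.Injective φ)
    (hsum : Summable (fun m => E (φ m) ^ 2)) :
    ∃ P : Set (Set (ℕ × ℕ)), P.Countable ∧
      P.Pairwise Disjoint ∧
      ⋃₀ P = {q : ℕ × ℕ | 1 ≤ q.2 ∧ q.2 ≤ M q.1} ∧
      ∀ s ∈ P, s.Infinite ∧ Set.InjOn Prod.fst s ∧
        Summable (fun x : s => (E (x : ℕ × ℕ).1) ^ 2) := by
  classical
  -- assignment of columns to (super-fiber, fiber) pairs
  set q : ℕ → ℕ × ℕ := fun n =>
    if h : ∃ m, φ m = n then Nat.unpair ((Nat.unpair h.choose).1) else (n, 0) with hq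
  have hqφ : ∀ m, q (φ m) = Nat.unpair ((Nat.unpair m).1) := by
    intro m
    have h : ∃ m', φ m' = φ m := ⟨m, rfl⟩
    simp only [hq, dif_pos h]
    have hc : h.choose = m := hφ h.choose_spec
    rw [hc]
  have hqjunk : ∀ n, (¬ ∃ m, φ m = n) → q n = (n, 0) := by
    intro n h
    simp only [hq, dif_neg h]
  -- the parts
  set Part : ℕ → ℕ → Set (ℕ × ℕ) := fun v j =>
    {x : ℕ × ℕ | (1 ≤ x.2 ∧ x.2 ≤ M x.1) ∧
      ((x.2 = 1 ∧ q x.1 = (v, j)) ∨ (x.2 = j + 2 ∧ (q x.1).1 + 1 = v))} with hPart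
  -- membership determines the part index
  have hdet : ∀ v j v' j' (x : ℕ × ℕ), x ∈ Part v j → x ∈ Part v' j' → (v, j) = (v', j') := by
    rintro v j v' j' ⟨n, i⟩ ⟨-, hx⟩ ⟨-, hy⟩
    rcases hx with ⟨h1, h2⟩ | ⟨h1, h2⟩ <;> rcases hy with ⟨h3, h4⟩ | ⟨h3, h4⟩
    · rw [h2] at h4; exact h4
    · omega
    · omega
    · have hj : j = j' := by omega
      subst hj
      rw [h2] at h4
      rw [h4]
  -- injectivity of fst on each part
  have hinjOn : ∀ v j, Set.InjOn Prod.fst (Part v j) := by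
    intro v j
    rintro ⟨n, i⟩ hx ⟨n', i'⟩ hy h
    simp only at h
    subst h
    obtain ⟨-, hx⟩ := hx
    obtain ⟨-, hy⟩ := hy
    have : i = i' := by
      rcases hx with ⟨h1, h2⟩ | ⟨h1, h2⟩ <;> rcases hy with ⟨h3, h4⟩ | ⟨h3, h4⟩
      · omega
      · rw [h2] at h4; simp at h4
      · rw [h4] at h2; simp at h2
      · omega
    simp [this]
  refine ⟨Set.range (fun w : ℕ × ℕ => Part w.1 w.2), Set.countable_range _, ?_, ?_, ?_⟩
  · -- pairwise disjoint
    rintro s ⟨w, rfl⟩ t ⟨w', rfl⟩ hst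
    refine Set.disjoint_left.mpr fun x hx hx' => hst ?_
    have h := hdet _ _ _ _ x hx hx'
    rw [Prod.mk.injEq] at h
    have hw : w = w' := Prod.ext h.1 h.2
    rw [hw]
  · -- union
    ext x
    simp only [Set.mem_sUnion, Set.mem_range, Set.mem_setOf_eq, exists_exists_eq_and]
    constructor
    · rintro ⟨w, hx⟩
      exact hx.1
    · rintro ⟨h1, h2⟩
      by_cases hx2 : x.2 = 1
      · exact ⟨((q x.1).1, (q x.1).2), ⟨h1, h2⟩, Or.inl ⟨hx2, rfl⟩⟩
      · exact ⟨((q x.1).1 + 1, x.2 - 2), ⟨h1, h2⟩, Or.inr ⟨by omega, rfl⟩⟩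
  · -- per-part properties
    rintro s ⟨⟨v, j⟩, rfl⟩
    refine ⟨?_, hinjOn v j, ?_⟩
    · -- infinite
      apply Set.infinite_of_injective_forall_mem
        (f := fun s : ℕ => ((φ (Nat.pair (Nat.pair v j) s), 1) : ℕ × ℕ))
      · intro a b hab
        simp only [Prod.mk.injEq] at hab
        have := hφ hab.1
        rw [Nat.pair_eq_pair] at this
        exact this.2
      · intro s
        refine ⟨⟨le_refl 1, hM _⟩, Or.inl ⟨rfl, ?_⟩⟩
        rw [hqφ]
        simp [Nat.unpair_pair]
    · -- summable
      have h1 : Summable (Set.indicator (Set.range φ) (fun n => E n ^ 2)) := by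
        rw [← Function.Injective.summable_iff hφ
          (fun x hx => Set.indicator_of_notMem hx _)]
        have : (Set.indicator (Set.range φ) (fun n => E n ^ 2)) ∘ φ
            = fun m => E (φ m) ^ 2 := by
          funext m
          simp [Set.indicator_of_mem (Set.mem_range_self m)]
        rw [this]
        exact hsum
      have h2 : Summable (Set.indicator ({v, v - 1} : Set ℕ) (fun n => E n ^ 2)) := by
        apply summable_of_finite_support
        exact Set.Finite.subset (Set.toFinite {v, v - 1}) Set.support_indicator_subset
      have hnn : ∀ n : ℕ, (0 : ℝ) ≤ E n ^ 2 := fun n => sq_nonneg _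
      have hS : Summable (Set.indicator (Set.range φ ∪ ({v, v - 1} : Set ℕ))
          (fun n => E n ^ 2)) := by
        apply Summable.of_nonneg_of_le
          (fun n => Set.indicator_nonneg (fun m _ => hnn m) n) (fun n => ?_) (h1.add h2)
        by_cases ha : n ∈ Set.range φ
        · rw [Set.indicator_of_mem (Set.mem_union_left _ ha), Set.indicator_of_mem ha]
          have := Set.indicator_nonneg (s := ({v, v - 1} : Set ℕ)) (fun m _ => hnn m) n
          linarith
        · by_cases hb : n ∈ ({v, v - 1} : Set ℕ)
          · rw [Set.indicator_of_mem (Set.mem_union_right _ hb),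
              Set.indicator_of_notMem ha, Set.indicator_of_mem hb]
            simp
          · have hu : n ∉ Set.range φ ∪ ({v, v - 1} : Set ℕ) := by
              simp only [Set.mem_union]
              tauto
            rw [Set.indicator_of_notMem hu,
              Set.indicator_of_notMem ha, Set.indicator_of_notMem hb]
            simp
      have hmem : ∀ x : Part v j, (x : ℕ × ℕ).1 ∈ Set.range φ ∪ ({v, v - 1} : Set ℕ) := by
        rintro ⟨⟨n, i⟩, -, hx⟩
        by_cases hn : ∃ m, φ m = n
        · exact Or.inl hn
        · right
          have hq0 := hqjunk n hn
          rcases hx with ⟨-, h2⟩ | ⟨-, h2⟩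
          · rw [hq0] at h2
            rw [Prod.mk.injEq] at h2
            simp [h2.1]
          · rw [hq0] at h2
            simp only [Set.mem_insert_iff, Set.mem_singleton_iff]
            simp only at h2
            omega
      have hinj : Function.Injective (fun x : Part v j => (x : ℕ × ℕ).1) := by
        intro x y hxy
        exact Subtype.ext (hinjOn v j x.2 y.2 hxy)
      apply Summable.of_nonneg_of_le (fun x => sq_nonneg _) (fun x => ?_)
        (hS.comp_injective hinj)
      simp only [Function.comp_apply]
      exact le_of_eq (Set.indicator_of_mem (hmem x) (fun n => E n ^ 2)).symm

/-- Given a strictly increasing sequence `E` of negative reals tending to `0`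
and positive multiplicities `M`, the index set `I = {(n,i) : 1 ≤ i ≤ M n}` admits an at most
countable partition into parts which are infinite, on which the first coordinate is injective,
and on which `∑ E n ^ 2` is finite. -/
theorem exists_countable_partition_index_set
    (E : ℕ → ℝ) (hmono : StrictMono E) (hneg : ∀ n, E n < 0)
    (hlim : Filter.Tendsto E Filter.atTop (nhds 0))
    (M : ℕ → ℕ) (hM : ∀ n, 1 ≤ M n) :
    ∃ P : Set (Set (ℕ × ℕ)), P.Countable ∧
      P.Pairwise Disjoint ∧
      ⋃₀ P = {q : ℕ × ℕ | 1 ≤ q.2 ∧ q.2 ≤ M q.1} ∧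
      ∀ s ∈ P, s.Infinite ∧ Set.InjOn Prod.fst s ∧
        Summable (fun x : s => (E (x : ℕ × ℕ).1) ^ 2) := by
  have hsq : Filter.Tendsto (fun n => E n ^ 2) Filter.atTop (nhds 0) := by
    have := hlim.pow 2
    simpa using this
  have h : ∀ m : ℕ, ∀ᶠ n in Filter.atTop, E n ^ 2 ≤ ((1 : ℝ) / 2) ^ m := by
    intro m
    have hpos : (0 : ℝ) < ((1 : ℝ) / 2) ^ m := by positivity
    filter_upwards [hsq.eventually_lt_const hpos] with n hn using hn.le
  obtain ⟨φ, hφmono, hφ⟩ := Filter.extraction_forall_of_eventually h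
  have hsum : Summable (fun m => E (φ m) ^ 2) :=
    Summable.of_nonneg_of_le (fun m => sq_nonneg _) hφ summable_geometric_two
  exact aux_partition_index_set E M hM φ hφmono.injective hsum
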